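/- arXiv:2106.07802 — 5 statements merged into one kernel-verified Lean document; each statement's English description precedes it below -/
import Mathlib

section
/- Let I be a finite index set, c : I → ℝ and Δ : I → ℝ such that s := Σ_{i∈I} c_i (cos Δ_i, sin Δ_i) ∈ ℝ² is nonzero, and for γ ∈ ℝ set s(γ) := Σ_{i∈I} c_i (cos(Δ_i + γ), sin(Δ_i + γ)). If γ₁, γ₂ ∈ ℝ satisfy s(γ₁)/‖s(γ₁)‖ = s(γ₂)/‖s(γ₂)‖, then γ₁ ≡ γ₂ (mod 2π). -/
open Real Matrix

/-- **Proposition 1 (uniqueness part).** If `s γ := Σ_i c i • (cos (Δ i + γ), sin (Δ i + γ))`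
with `s 0 ≠ 0`, then the normalized vector `s γ / ‖s γ‖` (Euclidean norm) determines `γ`
modulo `2π`. -/
theorem stmt1 {I : Type*} [Fintype I] (c Δ : I → ℝ)
    (s : ℝ → (Fin 2 → ℝ))
    (hs : ∀ γ, s γ = ∑ i, c i • ![Real.cos (Δ i + γ), Real.sin (Δ i + γ)])
    (hne : s 0 ≠ 0)
    (γ₁ γ₂ : ℝ)
    (h : (Real.sqrt (s γ₁ ⬝ᵥ s γ₁))⁻¹ • s γ₁ = (Real.sqrt (s γ₂ ⬝ᵥ s γ₂))⁻¹ • s γ₂) :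
    (γ₁ : Real.Angle) = (γ₂ : Real.Angle) := by
  set a : ℝ := ∑ i, c i * Real.cos (Δ i) with ha
  set b : ℝ := ∑ i, c i * Real.sin (Δ i) with hb
  have h0 : ∀ γ, s γ 0 = a * Real.cos γ - b * Real.sin γ := by
    intro γ
    simp only [hs, Finset.sum_apply, Pi.smul_apply, Matrix.cons_val_zero, smul_eq_mul,
      Real.cos_add, ha, hb, Finset.sum_mul, ← Finset.sum_sub_distrib]
    exact Finset.sum_congr rfl fun i _ => by ring
  have h1 : ∀ γ, s γ 1 = a * Real.sin γ + b * Real.cos γ := by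
    intro γ
    simp only [hs, Finset.sum_apply, Pi.smul_apply, Matrix.cons_val_one, Matrix.head_cons, Matrix.cons_val_zero,
      smul_eq_mul, Real.sin_add, ha, hb, Finset.sum_mul, ← Finset.sum_add_distrib]
    exact Finset.sum_congr rfl fun i _ => by ring
  have hdot : ∀ γ, s γ ⬝ᵥ s γ = a ^ 2 + b ^ 2 := by
    intro γ
    have hsc := Real.sin_sq_add_cos_sq γ
    simp only [dotProduct, Fin.sum_univ_two, h0, h1]
    nlinarith [hsc]
  have hab : a ^ 2 + b ^ 2 > 0 := by
    rcases eq_or_ne a 0 with ha0 | ha0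
    · rcases eq_or_ne b 0 with hb0 | hb0
      · exfalso
        apply hne
        funext j
        fin_cases j <;> simp [h0, h1, ha0, hb0]
      · positivity
    · positivity
  have hr : (Real.sqrt (a ^ 2 + b ^ 2))⁻¹ ≠ 0 := by
    simp [Real.sqrt_eq_zero', not_le]
    nlinarith
  rw [hdot, hdot] at h
  have hss : s γ₁ = s γ₂ := smul_right_injective (Fin 2 → ℝ) hr h
  have e1 : a * Real.cos γ₁ - b * Real.sin γ₁ = a * Real.cos γ₂ - b * Real.sin γ₂ := by
    rw [← h0, ← h0, hss]
  have e2 : a * Real.sin γ₁ + b * Real.cos γ₁ = a * Real.sin γ₂ + b * Real.cos γ₂ := by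
    rw [← h1, ← h1, hss]
  have hC : Real.cos γ₁ = Real.cos γ₂ := by
    have := mul_left_cancel₀ (ne_of_gt hab)
      (show (a ^ 2 + b ^ 2) * Real.cos γ₁ = (a ^ 2 + b ^ 2) * Real.cos γ₂ by
        linear_combination a * e1 + b * e2)
    exact this
  have hS : Real.sin γ₁ = Real.sin γ₂ := by
    exact mul_left_cancel₀ (ne_of_gt hab)
      (show (a ^ 2 + b ^ 2) * Real.sin γ₁ = (a ^ 2 + b ^ 2) * Real.sin γ₂ by
        linear_combination (-b) * e1 + a * e2)
  exact Real.Angle.cos_sin_inj hC hS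
end

section
/- Let a > 0, X = (0,0,0), Y = (a,0,0) in ℝ³, and let T, Z ∈ ℝ³ have nonzero projections onto the yz-plane. Let H_γ be the rotation of ℝ³ about the x-axis by angle γ, given by the matrix [[1,0,0],[0,cos γ,−sin γ],[0,sin γ,cos γ]]. Then the dihedral angle satisfies ∠(XY(H_γ T), XYZ) ≡ ∠(XYT, XYZ) − γ (mod 2π). -/
open Real Matrix Complex

open scoped Matrix

/-- The signed dihedral angle `∠(ABC, ABD)`, defined as
`atan2 (‖b₂‖ ⟨b₁, b₂×b₃⟩) (⟨b₁×b₂, b₂×b₃⟩)` with `b₁ = A − C`, `b₂ = B − A`, `b₃ = D − B`,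
where `atan2 y x` is the complex argument of `x + iy`. -/
noncomputable def dihedral (A B C D : Fin 3 → ℝ) : ℝ :=
  Complex.arg ((((A - C) ⨯₃ (B - A)) ⬝ᵥ ((B - A) ⨯₃ (D - B)) : ℝ) +
    (Real.sqrt ((B - A) ⬝ᵥ (B - A)) * ((A - C) ⬝ᵥ ((B - A) ⨯₃ (D - B)))) * Complex.I)

lemma dihedral_complex_eq (a : ℝ) (ha : 0 < a) (C Z : Fin 3 → ℝ) :
    ((((![0,0,0] - C) ⨯₃ (![a,0,0] - ![0,0,0])) ⬝ᵥ ((![a,0,0] - ![0,0,0]) ⨯₃ (Z - ![a,0,0])) : ℝ) +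
      (Real.sqrt ((![a,0,0] - ![0,0,0]) ⬝ᵥ (![a,0,0] - ![0,0,0])) *
        ((![0,0,0] - C) ⬝ᵥ ((![a,0,0] - ![0,0,0]) ⨯₃ (Z - ![a,0,0])))) * Complex.I : ℂ)
    = (a:ℂ)^2 * (((Z 1 : ℂ) + Z 2 * Complex.I) * ((C 1 : ℂ) - C 2 * Complex.I)) := by
  have hs : Real.sqrt ((![a,0,0] - ![0,0,0]) ⬝ᵥ (![a,0,0] - ![0,0,0])) = a := by
    have : ((![a,0,0] - ![0,0,0]) ⬝ᵥ (![a,0,0] - ![0,0,0]) : ℝ) = a * a := by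
      simp [dotProduct, Fin.sum_univ_three]
    rw [this, Real.sqrt_mul_self ha.le]
  rw [hs]
  simp [crossProduct, dotProduct, Fin.sum_univ_three, Matrix.vecHead, Matrix.vecTail,
    Function.comp]
  push_cast
  ring_nf
  simp [Complex.I_sq]

/-- Rotating `T` about the bond (x-)axis by `γ` shifts the dihedral angle across the bond:
`∠(XY(H_γ T), XYZ) ≡ ∠(XYT, XYZ) − γ (mod 2π)`. -/
theorem stmt3 (a : ℝ) (ha : 0 < a) (T Z : Fin 3 → ℝ)
    (X Y : Fin 3 → ℝ) (hX : X = ![0, 0, 0]) (hY : Y = ![a, 0, 0])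
    (hT : (T 1, T 2) ≠ (0, 0)) (hZ : (Z 1, Z 2) ≠ (0, 0))
    (γ : ℝ) (H : Matrix (Fin 3) (Fin 3) ℝ)
    (hH : H = !![1, 0, 0; 0, Real.cos γ, -Real.sin γ; 0, Real.sin γ, Real.cos γ]) :
    (dihedral X Y (H *ᵥ T) Z : Real.Angle) =
      (dihedral X Y T Z : Real.Angle) - (γ : Real.Angle) := by
  subst hX hY
  -- rotated components
  have hu : (((H *ᵥ T) 1 : ℂ) - ((H *ᵥ T) 2) * Complex.I)
      = ((Real.cos γ : ℂ) - Real.sin γ * Complex.I) * ((T 1 : ℂ) - T 2 * Complex.I) := by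
    subst hH
    simp [Matrix.mulVec, dotProduct, Fin.sum_univ_three, Matrix.vecHead, Matrix.vecTail]
    push_cast
    ring_nf
    simp [Complex.I_sq]
    ring
  -- nonvanishing facts
  have huT : ((T 1 : ℂ) - T 2 * Complex.I) ≠ 0 := by
    intro h
    rw [Complex.ext_iff] at h
    simp at h
    exact hT (by simp [Prod.ext_iff, h.1, h.2])
  have hvZ : ((Z 1 : ℂ) + Z 2 * Complex.I) ≠ 0 := by
    intro h
    rw [Complex.ext_iff] at h
    simp at h
    exact hZ (by simp [Prod.ext_iff, h.1, h.2])
  have he : ((Real.cos γ : ℂ) - Real.sin γ * Complex.I) ≠ 0 := by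
    have hexp : ((Real.cos γ : ℂ) - Real.sin γ * Complex.I) = Complex.exp ((-γ : ℝ) * Complex.I) := by
      rw [Complex.exp_mul_I]
      push_cast
      rw [Complex.cos_neg, Complex.sin_neg, ← Complex.ofReal_cos, ← Complex.ofReal_sin]
      ring
    rw [hexp]
    exact Complex.exp_ne_zero _
  have ha2 : ((a:ℂ)^2) ≠ 0 := pow_ne_zero _ (Complex.ofReal_ne_zero.mpr ha.ne')
  have hw : ((a:ℂ)^2 * (((Z 1 : ℂ) + Z 2 * Complex.I) * ((T 1 : ℂ) - T 2 * Complex.I))) ≠ 0 :=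
    mul_ne_zero ha2 (mul_ne_zero hvZ huT)
  -- arg of the rotation factor
  have harg : (Complex.arg ((Real.cos γ : ℂ) - Real.sin γ * Complex.I) : Real.Angle)
      = -(γ : Real.Angle) := by
    have h1 : ((Real.cos γ : ℂ) - Real.sin γ * Complex.I)
        = (((-γ : ℝ) : Real.Angle).cos : ℂ) + (((-γ : ℝ) : Real.Angle).sin : ℂ) * Complex.I := by
      rw [Real.Angle.cos_coe, Real.Angle.sin_coe, Real.cos_neg, Real.sin_neg]
      push_cast
      ring
    rw [h1, Complex.arg_cos_add_sin_mul_I_coe_angle ((-γ : ℝ) : Real.Angle)]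
    simp
  unfold dihedral
  rw [dihedral_complex_eq a ha (H *ᵥ T) Z, dihedral_complex_eq a ha T Z, hu]
  have hrw : ((a:ℂ)^2 * (((Z 1 : ℂ) + Z 2 * Complex.I) *
      (((Real.cos γ : ℂ) - Real.sin γ * Complex.I) * ((T 1 : ℂ) - T 2 * Complex.I))))
      = ((a:ℂ)^2 * (((Z 1 : ℂ) + Z 2 * Complex.I) * ((T 1 : ℂ) - T 2 * Complex.I))) *
        ((Real.cos γ : ℂ) - Real.sin γ * Complex.I) := by ring
  rw [hrw, Complex.arg_mul_coe_angle hw he, harg]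
  abel
end

section
/- Let a > 0, X = (0,0,0), Y = (a,0,0) in ℝ³, and let T, T' ∈ ℝ³ have nonzero projections onto the yz-plane. Let H_γ be the rotation of ℝ³ about the x-axis by angle γ, given by the matrix [[1,0,0],[0,cos γ,−sin γ],[0,sin γ,cos γ]]. Then ∠(XY(H_γ T), XY(H_γ T')) ≡ ∠(XYT, XYT') (mod 2π). -/
open Real Matrix Complex

open scoped Matrix

/-- Jointly rotating two neighbors `T, T'` on the same side of the bond about the bond
(x-)axis by `γ` leaves their mutual dihedral angle unchanged:
`∠(XY(H_γ T), XY(H_γ T')) ≡ ∠(XYT, XYT') (mod 2π)`. -/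
theorem stmt4 (a : ℝ) (ha : 0 < a) (T T' : Fin 3 → ℝ)
    (X Y : Fin 3 → ℝ) (hX : X = ![0, 0, 0]) (hY : Y = ![a, 0, 0])
    (hT : (T 1, T 2) ≠ (0, 0)) (hT' : (T' 1, T' 2) ≠ (0, 0))
    (γ : ℝ) (H : Matrix (Fin 3) (Fin 3) ℝ)
    (hH : H = !![1, 0, 0; 0, Real.cos γ, -Real.sin γ; 0, Real.sin γ, Real.cos γ]) :
    (dihedral X Y (H *ᵥ T) (H *ᵥ T') : Real.Angle) = (dihedral X Y T T' : Real.Angle) := by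
  subst hX hY hH
  have key : dihedral ![0, 0, 0] ![a, 0, 0]
      ((!![1, 0, 0; 0, Real.cos γ, -Real.sin γ; 0, Real.sin γ, Real.cos γ]) *ᵥ T)
      ((!![1, 0, 0; 0, Real.cos γ, -Real.sin γ; 0, Real.sin γ, Real.cos γ]) *ᵥ T')
      = dihedral ![0, 0, 0] ![a, 0, 0] T T' := by
    unfold dihedral
    congr 1
    have hpyth : Real.sin γ ^ 2 + Real.cos γ ^ 2 = 1 := Real.sin_sq_add_cos_sq γ
    simp only [crossProduct, dotProduct, Matrix.mulVec, Fin.sum_univ_three,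
      Pi.sub_apply, Matrix.cons_val_zero, Matrix.cons_val_one, Matrix.head_cons,
      Matrix.cons_val_two, Matrix.tail_cons, LinearMap.mk₂_apply,
      Matrix.cons_val', Matrix.empty_val', Matrix.cons_val_fin_one, Matrix.head_fin_const,
      Matrix.of_apply]
    push_cast
    ring_nf
    linear_combination (↑(T 1) * ↑(T' 1) * (↑a:ℂ) ^ 2 +
        (↑(T 1) * ↑(T' 2) * ↑a * ↑(Real.sqrt (a ^ 2)) * Complex.I -
          ↑(T 2) * ↑(T' 1) * ↑a * ↑(Real.sqrt (a ^ 2)) * Complex.I) +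
      ↑(T 2) * ↑(T' 2) * ↑a ^ 2) * (Complex.sin_sq_add_cos_sq (γ : ℂ))
  rw [key]
end

section
/- Let a > 0, X = (0,0,0), Y = (a,0,0) in ℝ³, and let T_i, T_k, Z_j, Z_l ∈ ℝ³ each have nonzero projection onto the yz-plane. Then the dihedral angles satisfy ∠(XYT_i, XYZ_j) ≡ ∠(XYT_k, XYZ_l) + ∠(XYT_i, XYT_k) + ∠(XYZ_l, XYZ_j) (mod 2π). -/
open Real Matrix Complex

open scoped Matrix

lemma dih_key (a : ℝ) (ha : 0 < a) (C D : Fin 3 → ℝ)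
    (hC : (C 1, C 2) ≠ (0, 0)) (hD : (D 1, D 2) ≠ (0, 0)) :
    (dihedral ![0,0,0] ![a,0,0] C D : Real.Angle) =
      (Complex.arg (D 1 + D 2 * Complex.I) : Real.Angle)
        - (Complex.arg (C 1 + C 2 * Complex.I) : Real.Angle) := by
  have hCeq : C = ![C 0, C 1, C 2] := by funext i; fin_cases i <;> rfl
  have hDeq : D = ![D 0, D 1, D 2] := by funext i; fin_cases i <;> rfl
  have hre : ((![0,0,0] - C) ⨯₃ (![a,0,0] - ![0,0,0])) ⬝ᵥ
      ((![a,0,0] - ![0,0,0]) ⨯₃ (D - ![a,0,0])) = a^2 * (C 1 * D 1 + C 2 * D 2) := by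
    rw [hCeq, hDeq]
    simp [crossProduct, dotProduct, Fin.sum_univ_three]
    ring
  have hdd : (![a,0,0] - ![0,0,0] : Fin 3 → ℝ) ⬝ᵥ (![a,0,0] - ![0,0,0]) = a * a := by
    simp [dotProduct, Fin.sum_univ_three]
  have hs : Real.sqrt ((![a,0,0] - ![0,0,0]) ⬝ᵥ (![a,0,0] - ![0,0,0])) = a := by
    rw [hdd, Real.sqrt_mul_self ha.le]
  have him : (![0,0,0] - C) ⬝ᵥ ((![a,0,0] - ![0,0,0]) ⨯₃ (D - ![a,0,0]))
      = a * (C 1 * D 2 - C 2 * D 1) := by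
    rw [hCeq, hDeq]
    simp [crossProduct, dotProduct, Fin.sum_univ_three]
    ring
  have hCne : (C 1 : ℂ) + C 2 * Complex.I ≠ 0 := by
    simp only [ne_eq, Complex.ext_iff, Complex.add_re, Complex.add_im, Complex.ofReal_re,
      Complex.ofReal_im, Complex.mul_re, Complex.mul_im, Complex.I_re, Complex.I_im,
      Complex.zero_re, Complex.zero_im, Prod.ext_iff] at hC ⊢
    intro h
    apply hC
    constructor <;> linarith [h.1, h.2]
  have hDne : (D 1 : ℂ) + D 2 * Complex.I ≠ 0 := by
    simp only [ne_eq, Complex.ext_iff, Complex.add_re, Complex.add_im, Complex.ofReal_re,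
      Complex.ofReal_im, Complex.mul_re, Complex.mul_im, Complex.I_re, Complex.I_im,
      Complex.zero_re, Complex.zero_im, Prod.ext_iff] at hD ⊢
    intro h
    apply hD
    constructor <;> linarith [h.1, h.2]
  have hcd : (starRingEnd ℂ) ((C 1 : ℂ) + C 2 * Complex.I) * ((D 1 : ℂ) + D 2 * Complex.I)
      = ((C 1 * D 1 + C 2 * D 2 : ℝ) : ℂ) + ((C 1 * D 2 - C 2 * D 1 : ℝ) : ℂ) * Complex.I := by
    apply Complex.ext <;>
      simp [Complex.mul_re, Complex.mul_im] <;> ring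
  have hz : ((((![0,0,0] - C) ⨯₃ (![a,0,0] - ![0,0,0])) ⬝ᵥ
        ((![a,0,0] - ![0,0,0]) ⨯₃ (D - ![a,0,0])) : ℝ) +
      (Real.sqrt ((![a,0,0] - ![0,0,0]) ⬝ᵥ (![a,0,0] - ![0,0,0])) *
        ((![0,0,0] - C) ⬝ᵥ ((![a,0,0] - ![0,0,0]) ⨯₃ (D - ![a,0,0])))) * Complex.I : ℂ)
      = (a^2 : ℝ) * ((starRingEnd ℂ) ((C 1 : ℂ) + C 2 * Complex.I) *
          ((D 1 : ℂ) + D 2 * Complex.I)) := by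
    rw [hre, hs, him, hcd]
    push_cast
    ring
  have harg : dihedral ![0,0,0] ![a,0,0] C D =
      Complex.arg ((starRingEnd ℂ) ((C 1 : ℂ) + C 2 * Complex.I) *
        ((D 1 : ℂ) + D 2 * Complex.I)) := by
    rw [dihedral, hz, Complex.arg_real_mul]
    positivity
  rw [harg, Complex.arg_mul_coe_angle (show (starRingEnd ℂ) ((C 1 : ℂ) + C 2 * Complex.I) ≠ 0 from star_ne_zero.mpr hCne) hDne,
    Complex.arg_conj_coe_angle]
  abel


/-- **Equation (3) of the paper.** Dihedral angles about a common bond are additive: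
`∠(XYTᵢ, XYZⱼ) ≡ ∠(XYTₖ, XYZₗ) + ∠(XYTᵢ, XYTₖ) + ∠(XYZₗ, XYZⱼ) (mod 2π)`. -/
theorem stmt5 (a : ℝ) (ha : 0 < a) (Ti Tk Zj Zl : Fin 3 → ℝ)
    (X Y : Fin 3 → ℝ) (hX : X = ![0, 0, 0]) (hY : Y = ![a, 0, 0])
    (hTi : (Ti 1, Ti 2) ≠ (0, 0)) (hTk : (Tk 1, Tk 2) ≠ (0, 0))
    (hZj : (Zj 1, Zj 2) ≠ (0, 0)) (hZl : (Zl 1, Zl 2) ≠ (0, 0)) :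
    (dihedral X Y Ti Zj : Real.Angle) =
      (dihedral X Y Tk Zl : Real.Angle) + (dihedral X Y Ti Tk : Real.Angle) +
        (dihedral X Y Zl Zj : Real.Angle) := by
  subst hX hY
  rw [dih_key a ha Ti Zj hTi hZj, dih_key a ha Tk Zl hTk hZl,
    dih_key a ha Ti Tk hTi hTk, dih_key a ha Zl Zj hZl hZj]
  abel
end

section
/- Let I be a finite index set, c : I → ℝ, Δᶜᵘʳ : I → ℝ, and γ* ∈ ℝ. Define Δ*_i := Δᶜᵘʳ_i − γ* for each i, s* := Σ_{i∈I} c_i (cos Δ*_i, sin Δ*_i) ∈ ℝ², and Aᶜᵘʳ := Σ_{i∈I} c_i A_{Δᶜᵘʳ_i}, where A_Δ := [[cos Δ, sin Δ],[sin Δ, −cos Δ]]. If s* ≠ 0, then (Aᶜᵘʳ)ᵀ s* ≠ 0 and (Aᶜᵘʳ)ᵀ s* / ‖(Aᶜᵘʳ)ᵀ s*‖ = (cos γ*, sin γ*). -/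
open Matrix Real

/-- **Correctness of the torsion-angle recovery formula.** With current dihedral angles
`Δᶜᵘʳ i`, target angles `Δ* i = Δᶜᵘʳ i − γ*`, `s* = Σ_i c i • (cos Δ*_i, sin Δ*_i)` and
`Aᶜᵘʳ = Σ_i c i • A_{Δᶜᵘʳ i}`, if `s* ≠ 0` then `(Aᶜᵘʳ)ᵀ s* ≠ 0` and
`(Aᶜᵘʳ)ᵀ s* / ‖(Aᶜᵘʳ)ᵀ s*‖ = (cos γ*, sin γ*)`. -/
theorem stmt14 {I : Type*} [Fintype I] (c Δcur : I → ℝ) (γstar : ℝ)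
    (Δstar : I → ℝ) (hΔ : ∀ i, Δstar i = Δcur i - γstar)
    (sstar : Fin 2 → ℝ)
    (hs : sstar = ∑ i, c i • ![Real.cos (Δstar i), Real.sin (Δstar i)])
    (Acur : Matrix (Fin 2) (Fin 2) ℝ)
    (hAcur : Acur = ∑ i, c i • !![Real.cos (Δcur i), Real.sin (Δcur i);
                                  Real.sin (Δcur i), -Real.cos (Δcur i)])
    (hne : sstar ≠ 0) :
    Acurᵀ *ᵥ sstar ≠ 0 ∧
    (Real.sqrt ((Acurᵀ *ᵥ sstar) ⬝ᵥ (Acurᵀ *ᵥ sstar)))⁻¹ • (Acurᵀ *ᵥ sstar)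
      = ![Real.cos γstar, Real.sin γstar] := by
  set C := ∑ i, c i * Real.cos (Δcur i) with hC
  set S := ∑ i, c i * Real.sin (Δcur i) with hS
  have hs0 : sstar 0 = C * Real.cos γstar + S * Real.sin γstar := by
    rw [hs, Finset.sum_apply]
    simp only [Pi.smul_apply, Matrix.cons_val_zero, smul_eq_mul]
    rw [Finset.sum_congr rfl (fun i _ => by rw [hΔ i, Real.cos_sub]; ring :
        ∀ i ∈ Finset.univ, c i * Real.cos (Δstar i)
        = c i * Real.cos (Δcur i) * Real.cos γstar + c i * Real.sin (Δcur i) * Real.sin γstar),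
      Finset.sum_add_distrib, ← Finset.sum_mul, ← Finset.sum_mul]
  have hs1 : sstar 1 = S * Real.cos γstar - C * Real.sin γstar := by
    rw [hs, Finset.sum_apply]
    simp only [Pi.smul_apply, Matrix.cons_val_one, Matrix.head_cons, Matrix.cons_val_zero, smul_eq_mul]
    rw [Finset.sum_congr rfl (fun i _ => by rw [hΔ i, Real.sin_sub]; ring :
        ∀ i ∈ Finset.univ, c i * Real.sin (Δstar i)
        = c i * Real.sin (Δcur i) * Real.cos γstar - c i * Real.cos (Δcur i) * Real.sin γstar),
      Finset.sum_sub_distrib, ← Finset.sum_mul, ← Finset.sum_mul]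
  have hA : Acur = !![C, S; S, -C] := by
    rw [hAcur]
    ext i j
    rw [Matrix.sum_apply]
    fin_cases i <;> fin_cases j <;>
      simp [Finset.sum_neg_distrib, hC, hS]
  have hkey : Acurᵀ *ᵥ sstar = (C^2 + S^2) • ![Real.cos γstar, Real.sin γstar] := by
    funext k
    fin_cases k <;>
      simp [hA, Matrix.mulVec, dotProduct, Fin.sum_univ_two, hs0, hs1] <;> ring
  have hr : sstar ⬝ᵥ sstar = C^2 + S^2 := by
    simp [dotProduct, Fin.sum_univ_two, hs0, hs1]
    nlinarith [Real.sin_sq_add_cos_sq γstar]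
  have hrpos : 0 < C^2 + S^2 := by
    rcases lt_or_eq_of_le (by positivity : (0:ℝ) ≤ C^2 + S^2) with h | h
    · exact h
    · exfalso; apply hne
      have hC0 : C = 0 := by nlinarith
      have hS0 : S = 0 := by nlinarith
      funext k
      fin_cases k <;> simp [hs0, hs1, hC0, hS0]
  have hvne : (![Real.cos γstar, Real.sin γstar] : Fin 2 → ℝ) ≠ 0 := by
    intro h
    have h0 := congrFun h 0
    have h1 := congrFun h 1
    simp at h0 h1
    nlinarith [Real.sin_sq_add_cos_sq γstar]
  constructor
  · rw [hkey]
    simp only [ne_eq, smul_eq_zero, not_or]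
    exact ⟨ne_of_gt hrpos, hvne⟩
  · rw [hkey]
    have hdot : ((C^2 + S^2) • ![Real.cos γstar, Real.sin γstar]) ⬝ᵥ
        ((C^2 + S^2) • ![Real.cos γstar, Real.sin γstar]) = (C^2 + S^2)^2 := by
      simp [dotProduct, Fin.sum_univ_two]
      nlinarith [Real.sin_sq_add_cos_sq γstar]
    rw [hdot, Real.sqrt_sq hrpos.le, smul_smul, inv_mul_cancel₀ (ne_of_gt hrpos), one_smul]
end
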